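/- Let l ≥ 1, work in EuclideanSpace ℝ (Fin l) with standard orthonormal basis x₁, …, x_l, set α_i = x_i − x_{i+1} for 1 ≤ i ≤ l−1 and α_l = x_l, and set d_i = 2 for all 1 ≤ i ≤ l. For each j let e_j be the unique vector with ⟨e_j, α_i⟩ = δ_{ij}/d_j for all i. Then e_j = (1/2) Σ_{k=1}^{j} x_k for all 1 ≤ j ≤ l, and max_{1≤j≤l} ‖e_j‖² = l/4. -/

import Mathlib

open scoped RealInnerProductSpace

lemma sum_apply_euc (l : ℕ) (s : Finset (Fin l)) (f : Fin l → EuclideanSpace ℝ (Fin l))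
    (i : Fin l) : (∑ k ∈ s, f k) i = ∑ k ∈ s, f k i := by
  induction s using Finset.cons_induction with
  | empty => rfl
  | cons a s ha ih => rw [Finset.sum_cons, Finset.sum_cons, ← ih]; rfl

lemma norm_sq_euc (l : ℕ) (v : EuclideanSpace ℝ (Fin l)) : ‖v‖ ^ 2 = ∑ i, (v i) ^ 2 := by
  rw [EuclideanSpace.norm_eq, Real.sq_sqrt (by positivity)]; simp [sq_abs]

theorem stmt9 (l : ℕ) (hl : 1 ≤ l)
    (x : Fin l → EuclideanSpace ℝ (Fin l))
    (hx : ∀ i, x i = EuclideanSpace.single i (1 : ℝ))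
    (α : Fin l → EuclideanSpace ℝ (Fin l))
    (hα : ∀ i : Fin l, α i =
      if h : (i : ℕ) + 1 < l then x i - x ⟨(i : ℕ) + 1, h⟩ else x i)
    (e : Fin l → EuclideanSpace ℝ (Fin l))
    (he : ∀ i j, ⟪e j, α i⟫ = if i = j then (1 / 2 : ℝ) else 0) :
    (∀ j : Fin l, e j = (1 / 2 : ℝ) •
        ∑ k ∈ Finset.univ.filter (fun k : Fin l => (k : ℕ) ≤ (j : ℕ)), x k) ∧
    Finset.univ.sup' (Finset.univ_nonempty_iff.mpr ⟨⟨0, hl⟩⟩)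
        (fun j : Fin l => ‖e j‖ ^ 2) = (l : ℝ) / 4 := by
  -- components of e j via inner products with the orthonormal basis
  have hcomp : ∀ (j i : Fin l), e j i = ⟪e j, x i⟫ := by
    intro j i
    rw [hx, EuclideanSpace.inner_single_right]
    simp
  have key : ∀ n : ℕ, ∀ (j i : Fin l), l - 1 - (i : ℕ) ≤ n →
      e j i = if (i : ℕ) ≤ (j : ℕ) then (1 / 2 : ℝ) else 0 := by
    intro n
    induction n with
    | zero =>
      intro j i hi
      have hi' : (i : ℕ) = l - 1 := by omega
      have htop : ¬ ((i : ℕ) + 1 < l) := by omega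
      have := he i j
      rw [hα i, dif_neg htop] at this
      rw [hcomp, this]
      have : (i : ℕ) ≤ (j : ℕ) ↔ i = j := by
        constructor
        · intro h; exact Fin.ext (by omega)
        · intro h; omega
      by_cases h : i = j
      · simp [h, this.mpr h]
      · rw [if_neg h, if_neg (fun hle => h (this.mp hle))]
    | succ n ih =>
      intro j i hi
      by_cases hlt : (i : ℕ) + 1 < l
      · have := he i j
        rw [hα i, dif_pos hlt, inner_sub_right] at this
        have h2 : e j ⟨(i : ℕ) + 1, hlt⟩ =
            if ((i : ℕ) + 1) ≤ (j : ℕ) then (1 / 2 : ℝ) else 0 :=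
          ih j ⟨(i : ℕ) + 1, hlt⟩ (by simp; omega)
        rw [← hcomp, ← hcomp, h2] at this
        have hij : (i = j) ↔ ((i : ℕ) = (j : ℕ)) := ⟨fun h => by omega, fun h => Fin.ext h⟩
        by_cases h : i = j
        · rw [if_pos h, if_neg (by omega : ¬ ((i : ℕ) + 1 ≤ (j : ℕ)))] at this
          rw [if_pos (by omega : (i : ℕ) ≤ (j : ℕ))]
          linarith
        · rw [if_neg h] at this
          have hne : (i : ℕ) ≠ (j : ℕ) := fun hh => h (hij.mpr hh)
          have : e j i = if ((i : ℕ) + 1) ≤ (j : ℕ) then (1 / 2 : ℝ) else 0 := by linarith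
          rw [this]
          by_cases hle : (i : ℕ) + 1 ≤ (j : ℕ)
          · rw [if_pos hle, if_pos (by omega)]
          · rw [if_neg hle, if_neg (by omega)]
      · -- same as base case
        have := he i j
        rw [hα i, dif_neg hlt] at this
        rw [hcomp, this]
        have hiff : (i : ℕ) ≤ (j : ℕ) ↔ i = j := by
          constructor
          · intro h; exact Fin.ext (by omega)
          · intro h; omega
        by_cases h : i = j
        · simp [h, hiff.mpr h]
        · rw [if_neg h, if_neg (fun hle => h (hiff.mp hle))]
  have hval : ∀ (j i : Fin l), e j i = if (i : ℕ) ≤ (j : ℕ) then (1 / 2 : ℝ) else 0 :=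
    fun j i => key (l - 1 - (i : ℕ)) j i le_rfl
  constructor
  · intro j
    ext i
    rw [hval j i]
    show _ = (1 / 2 : ℝ) * (∑ k ∈ Finset.univ.filter (fun k : Fin l => (k : ℕ) ≤ (j : ℕ)), x k) i
    rw [sum_apply_euc]
    have hxki : ∀ k : Fin l, x k i = if i = k then (1:ℝ) else 0 := by
      intro k; rw [hx]; exact EuclideanSpace.single_apply k 1 i
    simp only [hxki]
    rw [Finset.sum_ite_eq]
    by_cases h : (i : ℕ) ≤ (j : ℕ)
    · rw [if_pos h, if_pos (Finset.mem_filter.mpr ⟨Finset.mem_univ i, h⟩), mul_one]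
    · rw [if_neg h]
      have : i ∉ Finset.filter (fun k : Fin l => (k : ℕ) ≤ (j : ℕ)) Finset.univ :=
        fun hh => h (Finset.mem_filter.mp hh).2
      rw [if_neg this, mul_zero]
  · have hnorm : ∀ j : Fin l, ‖e j‖ ^ 2 = ((j : ℕ) + 1 : ℝ) / 4 := by
      intro j
      rw [norm_sq_euc]
      have : ∀ i : Fin l, (e j i) ^ 2 = if i ∈ Finset.Iic j then (1/4 : ℝ) else 0 := by
        intro i
        rw [hval j i]
        by_cases h : (i : ℕ) ≤ (j : ℕ)
        · rw [if_pos h, if_pos (Finset.mem_Iic.mpr (Fin.le_def.mpr h))]; norm_num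
        · rw [if_neg h, if_neg (fun hh => h (Fin.le_def.mp (Finset.mem_Iic.mp hh)))]; norm_num
      rw [Finset.sum_congr rfl (fun i _ => this i), Finset.sum_ite_mem,
        Finset.univ_inter, Finset.sum_const, Fin.card_Iic]
      ring
    apply le_antisymm
    · apply Finset.sup'_le
      intro j _
      rw [hnorm j]
      have : ((j : ℕ) : ℝ) + 1 ≤ (l : ℝ) := by
        have := j.isLt; exact_mod_cast Nat.succ_le_of_lt this
      linarith
    · have hmem : (⟨l - 1, by omega⟩ : Fin l) ∈ Finset.univ := Finset.mem_univ _
      calc (l : ℝ) / 4 = ‖e ⟨l - 1, by omega⟩‖ ^ 2 := by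
            rw [hnorm]
            have h1 : ((⟨l - 1, by omega⟩ : Fin l) : ℕ) = l - 1 := rfl
            rw [h1]
            have h2 : ((l - 1 : ℕ) : ℝ) + 1 = (l : ℝ) := by
              have : (l - 1 : ℕ) + 1 = l := by omega
              exact_mod_cast congrArg (Nat.cast : ℕ → ℝ) this
            rw [h2]
        _ ≤ _ := Finset.le_sup' (fun j : Fin l => ‖e j‖ ^ 2) hmem
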